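/- Let 𝓛 be a finite collection of dyadic cubes in ℝ^d and suppose there is a constant B ≥ 1 such that for every dyadic cube R, Σ_{Q ∈ 𝓛, Q ⊆ R} |Q| ≤ B |R|. Then (a John–Nirenberg-type conclusion) for every dyadic cube R and every integer k ≥ 1, |{x ∈ R : Σ_{Q ∈ 𝓛, Q ⊆ R} 1_Q(x) ≥ 2Bk}| ≤ 2^{-k} |R|. -/

import Mathlib

open MeasureTheory Set
open scoped ENNReal Classical

/-- A dyadic cube in `ℝ^d`, given by a scale `k` and lower-corner integer coordinates `m`. -/
structure DyadicCube (d : ℕ) where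
  k : ℤ
  m : Fin d → ℤ

/-- The subset of `ℝ^d` corresponding to a dyadic cube. -/
def DyadicCube.toSet {d : ℕ} (Q : DyadicCube d) : Set (Fin d → ℝ) :=
  Set.univ.pi fun i => Set.Ico ((Q.m i : ℝ) * 2 ^ Q.k) (((Q.m i : ℝ) + 1) * 2 ^ Q.k)

lemma ico_nested (j k : ℤ) (a b : ℤ) (hjk : j ≤ k) (x : ℝ)
    (hx1 : x ∈ Set.Ico ((a : ℝ) * 2 ^ j) (((a : ℝ) + 1) * 2 ^ j))
    (hx2 : x ∈ Set.Ico ((b : ℝ) * 2 ^ k) (((b : ℝ) + 1) * 2 ^ k)) :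
    Set.Ico ((a : ℝ) * 2 ^ j) (((a : ℝ) + 1) * 2 ^ j)
      ⊆ Set.Ico ((b : ℝ) * 2 ^ k) (((b : ℝ) + 1) * 2 ^ k) := by
  obtain ⟨hx1l, hx1r⟩ := hx1
  obtain ⟨hx2l, hx2r⟩ := hx2
  have hj : (0:ℝ) < 2 ^ j := zpow_pos (by norm_num) _
  set n : ℕ := (k - j).toNat with hn
  have hk2 : (2:ℝ) ^ k = 2 ^ n * 2 ^ j := by
    rw [← zpow_natCast, ← zpow_add₀ (two_ne_zero)]
    congr 1
    omega
  have h1 : ((b * 2 ^ n : ℤ) : ℝ) * 2 ^ j < ((a : ℝ) + 1) * 2 ^ j := by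
    push_cast
    calc ((b:ℝ) * 2 ^ n) * 2 ^ j = (b:ℝ) * 2 ^ k := by rw [hk2]; ring
    _ ≤ x := hx2l
    _ < _ := hx1r
  have h1' : (b * 2 ^ n : ℤ) ≤ a := by
    have := (mul_lt_mul_iff_left₀ hj).mp h1
    exact_mod_cast Int.lt_add_one_iff.mp (by exact_mod_cast this)
  have h2 : ((a : ℝ)) * 2 ^ j < ((b + 1) * 2 ^ n : ℤ) * 2 ^ j := by
    push_cast
    calc ((a:ℝ)) * 2 ^ j ≤ x := hx1l
    _ < ((b:ℝ) + 1) * 2 ^ k := hx2r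
    _ = ((b:ℝ) + 1) * 2 ^ n * 2 ^ j := by rw [hk2]; ring
  have h2' : a + 1 ≤ (b + 1) * 2 ^ n := by
    have := (mul_lt_mul_iff_left₀ hj).mp h2
    exact_mod_cast Int.add_one_le_iff.mpr (by exact_mod_cast this)
  intro y ⟨hyl, hyr⟩
  constructor
  · calc (b:ℝ) * 2 ^ k = ((b * 2 ^ n : ℤ) : ℝ) * 2 ^ j := by push_cast; rw [hk2]; ring
    _ ≤ (a:ℝ) * 2 ^ j := by
        apply mul_le_mul_of_nonneg_right _ hj.le
        exact_mod_cast h1'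
    _ ≤ y := hyl
  · calc y < ((a:ℝ) + 1) * 2 ^ j := hyr
    _ ≤ (((b + 1) * 2 ^ n : ℤ) : ℝ) * 2 ^ j := by
        apply mul_le_mul_of_nonneg_right _ hj.le
        exact_mod_cast h2'
    _ = ((b:ℝ) + 1) * 2 ^ k := by push_cast; rw [hk2]; ring

/-- Dyadic nesting: two dyadic cubes that intersect are nested. -/
lemma DyadicCube.nested {d : ℕ} (Q R : DyadicCube d) (h : (Q.toSet ∩ R.toSet).Nonempty) :
    Q.toSet ⊆ R.toSet ∨ R.toSet ⊆ Q.toSet := by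
  obtain ⟨x, hxQ, hxR⟩ := h
  have key : ∀ (A B : DyadicCube d), A.k ≤ B.k → x ∈ A.toSet → x ∈ B.toSet →
      A.toSet ⊆ B.toSet := by
    intro A B hk hxA hxB y hy i _
    exact ico_nested A.k B.k (A.m i) (B.m i) hk (x i) (hxA i (mem_univ i)) (hxB i (mem_univ i))
      (hy i (mem_univ i))
  rcases le_total Q.k R.k with h | h
  · exact Or.inl (key Q R h hxQ hxR)
  · exact Or.inr (key R Q h hxR hxQ)

lemma DyadicCube.meas {d : ℕ} (Q : DyadicCube d) : MeasurableSet Q.toSet :=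
  MeasurableSet.univ_pi fun _ => measurableSet_Ico

/-- count of cubes in `L` inside `s` containing `x`, as a real number -/
noncomputable def cnt {d : ℕ} (L : Finset (DyadicCube d)) (s : Set (Fin d → ℝ))
    (x : Fin d → ℝ) : ℝ :=
  ∑ Q ∈ L, if Q.toSet ⊆ s then Q.toSet.indicator (fun _ => (1 : ℝ)) x else 0

/-- number of cubes in `L` between `s` and `r` -/
noncomputable def nfun {d : ℕ} (L : Finset (DyadicCube d)) (r s : Set (Fin d → ℝ)) : ℝ :=
  ∑ Q ∈ L, if s ⊆ Q.toSet ∧ Q.toSet ⊆ r then 1 else 0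

/-- candidate sets: toSets of cubes in L inside r with heavy overlap count -/
noncomputable def cand {d : ℕ} (L : Finset (DyadicCube d)) (B : ℝ) (r : Set (Fin d → ℝ)) :
    Finset (Set (Fin d → ℝ)) :=
  (L.filter fun Q => Q.toSet ⊆ r ∧ 2 * B ≤ nfun L r Q.toSet).image DyadicCube.toSet

noncomputable def maxl {d : ℕ} (L : Finset (DyadicCube d)) (B : ℝ) (r : Set (Fin d → ℝ)) :
    Finset (Set (Fin d → ℝ)) :=
  (cand L B r).filter fun s => ∀ t ∈ cand L B r, s ⊆ t → s = t

lemma cand_spec {d : ℕ} {L : Finset (DyadicCube d)} {B : ℝ} {r : Set (Fin d → ℝ)}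
    {s : Set (Fin d → ℝ)} (hs : s ∈ cand L B r) :
    ∃ Q ∈ L, Q.toSet = s ∧ s ⊆ r ∧ 2 * B ≤ nfun L r s := by
  simp only [cand, Finset.mem_image, Finset.mem_filter] at hs
  obtain ⟨Q, ⟨hQL, hQr, hQn⟩, rfl⟩ := hs
  exact ⟨Q, hQL, rfl, hQr, hQn⟩

lemma cand_mem {d : ℕ} {L : Finset (DyadicCube d)} {B : ℝ} {r : Set (Fin d → ℝ)}
    {Q : DyadicCube d} (hQL : Q ∈ L) (hQr : Q.toSet ⊆ r) (hn : 2 * B ≤ nfun L r Q.toSet) :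
    Q.toSet ∈ cand L B r := by
  simp only [cand, Finset.mem_image, Finset.mem_filter]
  exact ⟨Q, ⟨hQL, hQr, hn⟩, rfl⟩

/-- maximal elements are pairwise disjoint -/
lemma maxl_disj {d : ℕ} {L : Finset (DyadicCube d)} {B : ℝ} {r : Set (Fin d → ℝ)} :
    ∀ s ∈ maxl L B r, ∀ t ∈ maxl L B r, s ≠ t → Disjoint s t := by
  intro s hs t ht hst
  rw [Set.disjoint_iff_inter_eq_empty]
  by_contra h
  obtain ⟨hs1, hs2⟩ := Finset.mem_filter.mp hs
  obtain ⟨ht1, ht2⟩ := Finset.mem_filter.mp ht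
  obtain ⟨Qs, _, hQs, _, _⟩ := cand_spec hs1
  obtain ⟨Qt, _, hQt, _, _⟩ := cand_spec ht1
  have hne : (s ∩ t).Nonempty := Set.nonempty_iff_ne_empty.mpr h
  rw [← hQs, ← hQt] at hne
  rcases Qs.nested Qt hne with hsub | hsub
  · exact hst (hs2 t ht1 (hQs ▸ hQt ▸ hsub))
  · exact hst (ht2 s hs1 (hQs ▸ hQt ▸ hsub)).symm

/-- Key packing estimate: the maximal cubes have total measure at most half. -/
lemma maxl_half {d : ℕ} (L : Finset (DyadicCube d)) (B : ℝ) (hB : 1 ≤ B)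
    (R : DyadicCube d)
    (hpack : ∀ R' : DyadicCube d,
      (∑ Q ∈ L, if Q.toSet ⊆ R'.toSet then volume Q.toSet else 0)
        ≤ ENNReal.ofReal B * volume R'.toSet) :
    ∑ s ∈ maxl L B R.toSet, volume s ≤ 2⁻¹ * volume R.toSet := by
  have hB0 : (0:ℝ) < B := lt_of_lt_of_le one_pos hB
  set r := R.toSet
  -- step 1: 2B * Σ vol s ≤ Σ_s nfun * vol s
  have step1 : ENNReal.ofReal (2 * B) * ∑ s ∈ maxl L B r, volume s
      ≤ ∑ s ∈ maxl L B r, ∑ Q ∈ L,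
          (if s ⊆ Q.toSet ∧ Q.toSet ⊆ r then volume s else 0) := by
    rw [Finset.mul_sum]
    apply Finset.sum_le_sum
    intro s hs
    obtain ⟨Q0, _, _, _, hn⟩ := cand_spec (Finset.mem_filter.mp hs).1
    calc ENNReal.ofReal (2 * B) * volume s
        ≤ ENNReal.ofReal (nfun L r s) * volume s := by
          exact mul_le_mul_left (ENNReal.ofReal_le_ofReal hn) _
      _ = ∑ Q ∈ L, (if s ⊆ Q.toSet ∧ Q.toSet ⊆ r then volume s else 0) := by
          rw [nfun, ENNReal.ofReal_sum_of_nonneg (fun Q _ => by positivity)]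
          rw [Finset.sum_mul]
          apply Finset.sum_congr rfl
          intro Q _
          split_ifs <;> simp
  -- step 2: swap and bound by packing
  have step2 : ∑ s ∈ maxl L B r, ∑ Q ∈ L,
        (if s ⊆ Q.toSet ∧ Q.toSet ⊆ r then volume s else 0)
      ≤ ENNReal.ofReal B * volume r := by
    rw [Finset.sum_comm]
    calc ∑ Q ∈ L, ∑ s ∈ maxl L B r, (if s ⊆ Q.toSet ∧ Q.toSet ⊆ r then volume s else 0)
        ≤ ∑ Q ∈ L, (if Q.toSet ⊆ r then volume Q.toSet else 0) := by
          apply Finset.sum_le_sum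
          intro Q _
          by_cases hQr : Q.toSet ⊆ r
          · simp only [hQr, if_true, and_true]
            calc ∑ s ∈ maxl L B r, (if s ⊆ Q.toSet then volume s else 0)
                = ∑ s ∈ (maxl L B r).filter (· ⊆ Q.toSet), volume s := by
                  rw [Finset.sum_filter]
              _ = volume (⋃ s ∈ (maxl L B r).filter (· ⊆ Q.toSet), s) := by
                  rw [measure_biUnion_finset]
                  · intro s hs t ht hst
                    exact maxl_disj s (Finset.mem_filter.mp hs).1 t
                      (Finset.mem_filter.mp ht).1 hst
                  · intro s hs
                    obtain ⟨Qs, _, hQs, _, _⟩ := cand_spec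
                      (Finset.mem_filter.mp (Finset.mem_filter.mp hs).1).1
                    exact hQs ▸ Qs.meas
              _ ≤ volume Q.toSet := by
                  apply measure_mono
                  apply Set.iUnion₂_subset
                  intro s hs
                  exact (Finset.mem_filter.mp hs).2
          · simp only [hQr, if_false, and_false]
            simp
      _ ≤ ENNReal.ofReal B * volume r := hpack R
  have key : ENNReal.ofReal B * (2 * ∑ s ∈ maxl L B r, volume s)
      ≤ ENNReal.ofReal B * volume r := by
    calc ENNReal.ofReal B * (2 * ∑ s ∈ maxl L B r, volume s)
        = ENNReal.ofReal (2 * B) * ∑ s ∈ maxl L B r, volume s := by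
          rw [ENNReal.ofReal_mul (by norm_num)]
          ring_nf
          congr 1
          · norm_num
      _ ≤ _ := step1.trans step2
  have h2 : 2 * ∑ s ∈ maxl L B r, volume s ≤ volume r :=
    (ENNReal.mul_le_mul_iff_right (by simp [hB0]) ENNReal.ofReal_ne_top).mp key
  calc ∑ s ∈ maxl L B r, volume s
      = 2⁻¹ * (2 * ∑ s ∈ maxl L B r, volume s) := by
        rw [← mul_assoc, ENNReal.inv_mul_cancel (by norm_num) (by norm_num), one_mul]
    _ ≤ 2⁻¹ * volume r := by gcongr

/-- Covering: high-count points lie in some maximal candidate. -/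
lemma maxl_cover {d : ℕ} {L : Finset (DyadicCube d)} {B : ℝ} (hB : 1 ≤ B)
    {r : Set (Fin d → ℝ)} {x : Fin d → ℝ} (hc : 2 * B ≤ cnt L r x) :
    ∃ s ∈ maxl L B r, x ∈ s := by
  have hB0 : (0:ℝ) < B := lt_of_lt_of_le one_pos hB
  set A := (L.filter fun Q => Q.toSet ⊆ r ∧ x ∈ Q.toSet).image DyadicCube.toSet with hA
  have hAne : A.Nonempty := by
    by_contra h
    rw [Finset.not_nonempty_iff_eq_empty, Finset.image_eq_empty,
      Finset.filter_eq_empty_iff] at h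
    have : cnt L r x = 0 := by
      apply Finset.sum_eq_zero
      intro Q hQ
      by_cases hQr : Q.toSet ⊆ r
      · have hx : x ∉ Q.toSet := fun hx => h hQ ⟨hQr, hx⟩
        simp [hQr, Set.indicator_of_notMem hx]
      · simp [hQr]
    linarith
  obtain ⟨a, ha⟩ := hAne
  obtain ⟨s0, hs0le, hs0min⟩ := A.exists_le_minimal ha
  obtain ⟨Q0, hQ0L, ⟨hQ0r, hxQ0⟩, hQ0s⟩ : ∃ Q0 ∈ L, (Q0.toSet ⊆ r ∧ x ∈ Q0.toSet)
      ∧ Q0.toSet = s0 := by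
    have := hs0min.1
    simp only [hA, Finset.mem_image, Finset.mem_filter] at this
    obtain ⟨Q0, ⟨h1, h2⟩, h3⟩ := this
    exact ⟨Q0, h1, h2, h3⟩
  have hxs0 : x ∈ s0 := hQ0s ▸ hxQ0
  have hs0r : s0 ⊆ r := hQ0s ▸ hQ0r
  -- nfun L r s0 = cnt L r x
  have heq : nfun L r s0 = cnt L r x := by
    apply Finset.sum_congr rfl
    intro Q hQ
    by_cases hQr : Q.toSet ⊆ r
    · by_cases hxQ : x ∈ Q.toSet
      · have hQA : Q.toSet ∈ A := by
          simp only [hA, Finset.mem_image, Finset.mem_filter]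
          exact ⟨Q, ⟨hQ, hQr, hxQ⟩, rfl⟩
        have hsub : s0 ⊆ Q.toSet := by
          rcases Q.nested Q0 ⟨x, hxQ, hxQ0⟩ with h | h
          · exact hs0min.2 hQA (hQ0s ▸ h)
          · exact hQ0s ▸ h
        simp [hsub, hQr, Set.indicator_of_mem hxQ]
      · have hnsub : ¬ s0 ⊆ Q.toSet := fun h => hxQ (h hxs0)
        simp [hnsub, hQr, Set.indicator_of_notMem hxQ]
    · simp [hQr]
  have hs0c : s0 ∈ cand L B r := hQ0s ▸ cand_mem hQ0L hQ0r (by rw [hQ0s, heq]; exact hc)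
  obtain ⟨t, hst, htmax⟩ := (cand L B r).exists_le_maximal hs0c
  refine ⟨t, ?_, hst hxs0⟩
  rw [maxl, Finset.mem_filter]
  exact ⟨htmax.1, fun u hu htu => le_antisymm htu (htmax.2 hu htu)⟩

/-- Decomposition at a maximal cube. -/
lemma maxl_decomp {d : ℕ} {L : Finset (DyadicCube d)} {B : ℝ} (hB : 1 ≤ B)
    {r : Set (Fin d → ℝ)} {s : Set (Fin d → ℝ)} (hs : s ∈ maxl L B r)
    {x : Fin d → ℝ} (hx : x ∈ s) :
    ∃ m : ℝ, m ≤ 2 * B ∧ cnt L r x = cnt L s x + m := by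
  have hB0 : (0:ℝ) < B := lt_of_lt_of_le one_pos hB
  obtain ⟨hsc, hsmax⟩ := Finset.mem_filter.mp hs
  obtain ⟨S, hSL, hSs, hsr, _⟩ := cand_spec hsc
  refine ⟨∑ Q ∈ L, if s ⊂ Q.toSet ∧ Q.toSet ⊆ r then (1:ℝ) else 0, ?_, ?_⟩
  · -- the overflow count is at most 2B
    set P := (L.filter fun Q => s ⊂ Q.toSet ∧ Q.toSet ⊆ r).image DyadicCube.toSet with hP
    rcases Finset.eq_empty_or_nonempty P with hPe | ⟨a, ha⟩
    · rw [hP, Finset.image_eq_empty, Finset.filter_eq_empty_iff] at hPe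
      have : (∑ Q ∈ L, if s ⊂ Q.toSet ∧ Q.toSet ⊆ r then (1:ℝ) else 0) = 0 :=
        Finset.sum_eq_zero fun Q hQ => by simp [hPe hQ]
      linarith
    · obtain ⟨t, htle, htmin⟩ := P.exists_le_minimal ha
      obtain ⟨T, hTL, ⟨hsT, hTr⟩, hTt⟩ : ∃ T ∈ L, (s ⊂ T.toSet ∧ T.toSet ⊆ r)
          ∧ T.toSet = t := by
        have := htmin.1
        simp only [hP, Finset.mem_image, Finset.mem_filter] at this
        obtain ⟨T, ⟨h1, h2⟩, h3⟩ := this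
        exact ⟨T, h1, h2, h3⟩
      have hxt : x ∈ t := hTt ▸ hsT.1 hx
      have heq : (∑ Q ∈ L, if s ⊂ Q.toSet ∧ Q.toSet ⊆ r then (1:ℝ) else 0)
          = nfun L r t := by
        apply Finset.sum_congr rfl
        intro Q hQ
        by_cases hcond : s ⊂ Q.toSet ∧ Q.toSet ⊆ r
        · have hQP : Q.toSet ∈ P := by
            simp only [hP, Finset.mem_image, Finset.mem_filter]
            exact ⟨Q, ⟨hQ, hcond⟩, rfl⟩
          have hxQ : x ∈ Q.toSet := hcond.1.1 hx
          have hsub : t ⊆ Q.toSet := by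
            rcases Q.nested T ⟨x, hxQ, hTt ▸ hxt⟩ with h | h
            · exact htmin.2 hQP (hTt ▸ h)
            · exact hTt ▸ h
          simp [hcond, hsub, hcond.2]
        · have : ¬ (t ⊆ Q.toSet ∧ Q.toSet ⊆ r) := by
            rintro ⟨h1, h2⟩
            exact hcond ⟨lt_of_lt_of_le (hTt ▸ hsT) h1, h2⟩
          simp [hcond, this]
      have hlt : nfun L r t < 2 * B := by
        by_contra h
        push_neg at h
        have htc : t ∈ cand L B r := hTt ▸ cand_mem hTL hTr (hTt ▸ h)
        have heqst := hsmax t htc (hTt ▸ hsT.1)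
        have h2 : s ⊂ t := hTt ▸ hsT
        rw [heqst] at h2
        exact h2.2 (le_refl _)
      linarith [heq ▸ hlt]
  · -- the decomposition identity
    rw [cnt, cnt, ← Finset.sum_add_distrib]
    apply Finset.sum_congr rfl
    intro Q hQ
    by_cases hQr : Q.toSet ⊆ r
    · by_cases hQs : Q.toSet ⊆ s
      · have : ¬ s ⊂ Q.toSet := fun h => h.2 hQs
        simp [hQr, hQs, this]
      · have hxQiff : x ∈ Q.toSet ↔ s ⊂ Q.toSet := by
          constructor
          · intro hxQ
            rcases Q.nested S ⟨x, hxQ, hSs ▸ hx⟩ with h | h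
            · exact absurd (hSs ▸ h) hQs
            · exact ⟨hSs ▸ h, fun h' => hQs h'⟩
          · intro h
            exact h.1 hx
        by_cases hxQ : x ∈ Q.toSet
        · simp [hQr, hQs, hxQiff.mp hxQ, Set.indicator_of_mem hxQ]
        · have : ¬ s ⊂ Q.toSet := fun h => hxQ (hxQiff.mpr h)
          simp [hQr, hQs, this, Set.indicator_of_notMem hxQ]
    · have h1 : ¬ (s ⊂ Q.toSet ∧ Q.toSet ⊆ r) := fun h => hQr h.2
      have h2 : ¬ Q.toSet ⊆ s := fun h => hQr (h.trans hsr)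
      simp [hQr, h1, h2]

/-- Carleson packing with constant `B` implies exponential decay of the level sets of the
overlap function: `|{x ∈ R : Σ_{Q ∈ 𝓛, Q ⊆ R} 1_Q(x) ≥ 2Bk}| ≤ 2^{-k}|R|`. -/
theorem stmt9 {d : ℕ} (L : Finset (DyadicCube d)) (B : ℝ) (hB : 1 ≤ B)
    (hpack : ∀ R : DyadicCube d,
      (∑ Q ∈ L, if Q.toSet ⊆ R.toSet then volume Q.toSet else 0)
        ≤ ENNReal.ofReal B * volume R.toSet) :
    ∀ (R : DyadicCube d) (k : ℕ), 1 ≤ k →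
      volume {x ∈ R.toSet |
          2 * B * (k : ℝ) ≤
            ∑ Q ∈ L, if Q.toSet ⊆ R.toSet
              then Q.toSet.indicator (fun _ => (1 : ℝ)) x else 0}
        ≤ (2 : ℝ≥0∞)⁻¹ ^ k * volume R.toSet := by
  have hB0 : (0:ℝ) < B := lt_of_lt_of_le one_pos hB
  have main : ∀ (k : ℕ), 1 ≤ k → ∀ (R : DyadicCube d),
      volume {x ∈ R.toSet | 2 * B * (k : ℝ) ≤ cnt L R.toSet x}
        ≤ (2 : ℝ≥0∞)⁻¹ ^ k * volume R.toSet := by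
    intro k hk
    induction k, hk using Nat.le_induction with
    | base =>
      intro R
      have hsub : {x ∈ R.toSet | 2 * B * ((1:ℕ) : ℝ) ≤ cnt L R.toSet x}
          ⊆ ⋃ s ∈ maxl L B R.toSet, s := by
        rintro x ⟨hxR, hc⟩
        obtain ⟨s, hs, hxs⟩ := maxl_cover hB (by push_cast at hc; linarith)
        exact Set.mem_biUnion hs hxs
      calc volume {x ∈ R.toSet | 2 * B * ((1:ℕ) : ℝ) ≤ cnt L R.toSet x}
          ≤ volume (⋃ s ∈ maxl L B R.toSet, s) := measure_mono hsub
        _ ≤ ∑ s ∈ maxl L B R.toSet, volume s := measure_biUnion_finset_le _ _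
        _ ≤ 2⁻¹ * volume R.toSet := maxl_half L B hB R hpack
        _ = (2 : ℝ≥0∞)⁻¹ ^ (1:ℕ) * volume R.toSet := by rw [pow_one]
    | succ k hk ih =>
      intro R
      have hsub : {x ∈ R.toSet | 2 * B * ((k+1:ℕ) : ℝ) ≤ cnt L R.toSet x}
          ⊆ ⋃ s ∈ maxl L B R.toSet, {x ∈ s | 2 * B * (k : ℝ) ≤ cnt L s x} := by
        rintro x ⟨hxR, hc⟩
        have hkr : (1:ℝ) ≤ (k : ℝ) := by exact_mod_cast hk
        have hk1 : (1:ℝ) ≤ ((k+1:ℕ) : ℝ) := by push_cast; linarith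
        have hc2 : 2 * B ≤ cnt L R.toSet x := by nlinarith
        obtain ⟨s, hs, hxs⟩ := maxl_cover hB hc2
        obtain ⟨m, hm, hdec⟩ := maxl_decomp hB hs hxs
        refine Set.mem_biUnion hs ⟨hxs, ?_⟩
        push_cast at hc ⊢
        linarith
      calc volume {x ∈ R.toSet | 2 * B * ((k+1:ℕ) : ℝ) ≤ cnt L R.toSet x}
          ≤ volume (⋃ s ∈ maxl L B R.toSet, {x ∈ s | 2 * B * (k : ℝ) ≤ cnt L s x}) :=
            measure_mono hsub
        _ ≤ ∑ s ∈ maxl L B R.toSet, volume {x ∈ s | 2 * B * (k : ℝ) ≤ cnt L s x} :=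
            measure_biUnion_finset_le _ _
        _ ≤ ∑ s ∈ maxl L B R.toSet, (2 : ℝ≥0∞)⁻¹ ^ k * volume s := by
            apply Finset.sum_le_sum
            intro s hs
            obtain ⟨S, _, hSs, _, _⟩ := cand_spec (Finset.mem_filter.mp hs).1
            rw [← hSs]
            exact ih S
        _ = (2 : ℝ≥0∞)⁻¹ ^ k * ∑ s ∈ maxl L B R.toSet, volume s := by
            rw [Finset.mul_sum]
        _ ≤ (2 : ℝ≥0∞)⁻¹ ^ k * (2⁻¹ * volume R.toSet) := by
            gcongr
            exact maxl_half L B hB R hpack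
        _ = (2 : ℝ≥0∞)⁻¹ ^ (k+1) * volume R.toSet := by rw [pow_succ]; ring
  intro R k hk
  exact main k hk R
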